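/- Let d, n, G be positive integers, R > 0, B₀ > 0, let v_0,…,v_{G−1} ∈ ℝ^{dn}, and let Y_0,…,Y_{G−1} ∈ ℝ^{d×n} be matrices all of whose entries lie in (−B₀, B₀). Then there exist a sum-of-linear-transformations layer Linear : ℝ^{d×n} → ℝ^{(2dG+1)×2dG} and matrices W_K, W_Q ∈ ℝ^{(n+2)×(2dG+1)} (more generally of suitable dimensions), W_V ∈ ℝ^{d×(2dG+1)}, W_O ∈ ℝ^{2dG×n} such that for every Z ∈ ℝ^{d×n}, with Z̃ ∈ ℝ^{dn} the column-stacking of Z: W_V·Linear(Z) · Softmax((W_K·Linear(Z))ᵀ · W_Q·Linear(Z)) · W_O = Σ_{j=0}^{G−1} (exp(R(v_jᵀZ̃ − ½‖v_j‖₂²)) / Σ_{k=0}^{G−1} exp(R(v_kᵀZ̃ − ½‖v_k‖₂²))) · Y_j. -/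

import Mathlib

open Matrix

/-- Column-wise softmax of a real matrix. -/
noncomputable def softmax {a b : ℕ} (M : Matrix (Fin a) (Fin b) ℝ) :
    Matrix (Fin a) (Fin b) ℝ :=
  Matrix.of fun i j => Real.exp (M i j) / ∑ k, Real.exp (M k j)

/-- Column stacking of a `d × n` matrix into a vector of length `d*n`:
the entry at index `idx` is `Z (idx % d) (idx / d)`, so the columns
`z_1, …, z_n` are stacked in order. -/
def colStack {d n : ℕ} (hd : 0 < d) (Z : Matrix (Fin d) (Fin n) ℝ) :
    Fin (d * n) → ℝ :=
  fun idx => Z ⟨idx.1 % d, Nat.mod_lt _ hd⟩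
    ⟨idx.1 / d, Nat.div_lt_of_lt_mul idx.2⟩

namespace SAttn

/-- Encoding `Fin d × Fin n ≃ Fin (d*n)` by `(ρ, c) ↦ ρ + d*c`. -/
def encDN (d n : ℕ) (hd : 0 < d) : Fin d × Fin n ≃ Fin (d * n) where
  toFun x := ⟨x.1.1 + d * x.2.1, by
    have h2 := x.2.2
    calc x.1.1 + d * x.2.1 < d + d * x.2.1 := by omega
      _ = d * (x.2.1 + 1) := by ring
      _ ≤ d * n := Nat.mul_le_mul_left d h2⟩
  invFun t := (⟨t.1 % d, Nat.mod_lt _ hd⟩, ⟨t.1 / d, Nat.div_lt_of_lt_mul t.2⟩)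
  left_inv := by
    rintro ⟨⟨a, ha⟩, ⟨b, hb⟩⟩
    have h1 : (a + d * b) % d = a := by
      rw [Nat.add_mul_mod_self_left, Nat.mod_eq_of_lt ha]
    have h2 : (a + d * b) / d = b := by
      rw [Nat.add_mul_div_left _ _ hd, Nat.div_eq_of_lt ha, Nat.zero_add]
    simp [Prod.ext_iff, Fin.ext_iff, h1, h2]
  right_inv := by
    rintro ⟨t, ht⟩
    simp [Fin.ext_iff, Nat.mod_add_div]

lemma encDN_mod {d n : ℕ} (hd : 0 < d) (x : Fin d × Fin n) :
    ((encDN d n hd x) : Fin (d*n)).1 % d = x.1.1 := by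
  have h := (encDN d n hd).symm_apply_apply x
  exact congrArg (fun y : Fin d × Fin n => y.1.1) h

lemma encDN_div {d n : ℕ} (hd : 0 < d) (x : Fin d × Fin n) :
    ((encDN d n hd x) : Fin (d*n)).1 / d = x.2.1 := by
  have h := (encDN d n hd).symm_apply_apply x
  exact congrArg (fun y : Fin d × Fin n => y.2.1) h

/-- group index -/
def giF {d G : ℕ} (i : Fin (2*d*G)) : Fin G := ⟨i.1 / (2*d), Nat.div_lt_of_lt_mul i.2⟩
/-- row index -/
def riF {d G : ℕ} (hd : 0 < d) (i : Fin (2*d*G)) : Fin d := ⟨i.1 / 2 % d, Nat.mod_lt _ hd⟩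
/-- sign -/
noncomputable def sgF {d G : ℕ} (i : Fin (2*d*G)) : ℝ := if i.1 % 2 = 0 then 1 else -1

/-- Encoding `Fin G × Fin d × Fin 2 ≃ Fin (2*d*G)` by `(a,b,c) ↦ c + 2*(b + d*a)`. -/
def encG (d G : ℕ) (hd : 0 < d) (hG : 0 < G) : Fin G × Fin d × Fin 2 ≃ Fin (2*d*G) where
  toFun x := ⟨x.2.2.1 + 2 * (x.2.1.1 + d * x.1.1), by
    have ha := x.1.2; have hb := x.2.1.2; have hc := x.2.2.2
    calc x.2.2.1 + 2 * (x.2.1.1 + d * x.1.1) < 2 * (1 + x.2.1.1 + d * x.1.1) := by omega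
      _ ≤ 2 * (d + d * x.1.1) := by
          exact Nat.mul_le_mul_left 2 (by omega : 1 + x.2.1.1 + d * x.1.1 ≤ d + d * x.1.1)
      _ = 2 * d * (1 + x.1.1) := by ring
      _ ≤ 2 * d * G := Nat.mul_le_mul_left _ (by omega)⟩
  invFun i := (giF i, riF hd i, ⟨i.1 % 2, Nat.mod_lt _ (by norm_num)⟩)
  left_inv := by
    rintro ⟨⟨a, ha⟩, ⟨b, hb⟩, ⟨c, hc⟩⟩
    have h1 : (c + 2 * (b + d * a)) % 2 = c := by
      rw [Nat.add_mul_mod_self_left, Nat.mod_eq_of_lt hc]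
    have h2 : (c + 2 * (b + d * a)) / 2 % d = b := by
      rw [Nat.add_mul_div_left _ _ (by norm_num : 0 < 2), Nat.div_eq_of_lt hc, Nat.zero_add,
        Nat.add_mul_mod_self_left, Nat.mod_eq_of_lt hb]
    have h3 : (c + 2 * (b + d * a)) / (2 * d) = a := by
      have : c + 2 * (b + d * a) = (c + 2 * b) + 2 * d * a := by ring
      rw [this, Nat.add_mul_div_left _ _ (by omega : 0 < 2 * d),
        Nat.div_eq_of_lt (by omega : c + 2 * b < 2 * d), Nat.zero_add]
    simp [Prod.ext_iff, Fin.ext_iff, giF, riF, h1, h2, h3]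
  right_inv := by
    rintro ⟨t, ht⟩
    have : t / 2 / d = t / (2 * d) := Nat.div_div_eq_div_mul t 2 d
    simp only [giF, riF, Fin.ext_iff]
    rw [← this]
    simp [Nat.mod_add_div]

lemma giF_encG {d G : ℕ} (hd : 0 < d) (hG : 0 < G) (x : Fin G × Fin d × Fin 2) :
    giF (encG d G hd hG x) = x.1 := by
  have h := (encG d G hd hG).symm_apply_apply x
  exact congrArg (fun y : Fin G × Fin d × Fin 2 => y.1) h

lemma riF_encG {d G : ℕ} (hd : 0 < d) (hG : 0 < G) (x : Fin G × Fin d × Fin 2) :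
    riF hd (encG d G hd hG x) = x.2.1 := by
  have h := (encG d G hd hG).symm_apply_apply x
  exact congrArg (fun y : Fin G × Fin d × Fin 2 => y.2.1) h

lemma mod2_encG {d G : ℕ} (hd : 0 < d) (hG : 0 < G) (x : Fin G × Fin d × Fin 2) :
    ((encG d G hd hG x) : Fin (2*d*G)).1 % 2 = x.2.2.1 := by
  have h := (encG d G hd hG).symm_apply_apply x
  exact congrArg (fun y : Fin G × Fin d × Fin 2 => y.2.2.1) h



open Matrix

noncomputable def Ef {d G : ℕ} (hd : 0 < d) (i j : Fin (2*d*G)) : ℝ :=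
  2 + (if giF i = giF j ∧ riF hd i = riF hd j then sgF i * sgF j else 0)

lemma Ef_pos {d G : ℕ} (hd : 0 < d) (i j : Fin (2*d*G)) : 0 < Ef hd i j := by
  unfold Ef sgF; split_ifs <;> norm_num

lemma exp_log_Ef {d G : ℕ} (hd : 0 < d) (i j : Fin (2*d*G)) :
    Real.exp (Real.log (Ef hd i j)) = Ef hd i j := Real.exp_log (Ef_pos hd i j)

def hm2 {d G : ℕ} (hd : 0 < d) (hG : 0 < G) : 0 < 2*d*G :=
  Nat.mul_pos (Nat.mul_pos (by norm_num) hd) hG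

noncomputable def Pm {d n G : ℕ} (hd : 0 < d) (hG : 0 < G) (v : Fin G → Fin (d*n) → ℝ)
    (h : Fin (2*d*G*n)) : Matrix (Fin (2*d*G+1)) (Fin d) ℝ :=
  Matrix.of fun β ρ =>
    if β = Fin.last _ then
      v (giF ((encDN (2*d*G) n (hm2 hd hG)).symm h).1)
        (encDN d n hd (ρ, ((encDN (2*d*G) n (hm2 hd hG)).symm h).2))
    else 0

noncomputable def Qm {d n G : ℕ} (hd : 0 < d) (hG : 0 < G)
    (h : Fin (2*d*G*n)) : Matrix (Fin n) (Fin (2*d*G)) ℝ :=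
  Matrix.of fun c i =>
    (if i = ((encDN (2*d*G) n (hm2 hd hG)).symm h).1 then 1 else 0) *
    (if c = ((encDN (2*d*G) n (hm2 hd hG)).symm h).2 then 1 else 0)

noncomputable def Rbm {d n G : ℕ} (v : Fin G → Fin (d*n) → ℝ) :
    Matrix (Fin (2*d*G+1)) (Fin (2*d*G)) ℝ :=
  Matrix.of fun β i =>
    if β = Fin.last _ then -(∑ t, v (giF i) t ^ 2) / 2
    else if β = i.castSucc then 1 else 0

noncomputable def WKm (d G : ℕ) (R : ℝ) : Matrix (Fin (2*d*G+1)) (Fin (2*d*G+1)) ℝ :=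
  Matrix.of fun a β =>
    if a = Fin.last _ then (if β = Fin.last _ then R else 0)
    else (if β = a then 1 else 0)

noncomputable def WQm {d G : ℕ} (hd : 0 < d) : Matrix (Fin (2*d*G+1)) (Fin (2*d*G+1)) ℝ :=
  Matrix.of fun a β =>
    if hβ : β = Fin.last _ then 0
    else if ha : a = Fin.last _ then 1
    else Real.log (Ef hd (a.castPred ha) (β.castPred hβ))

noncomputable def WVm {d G : ℕ} (hd : 0 < d) : Matrix (Fin d) (Fin (2*d*G+1)) ℝ :=
  Matrix.of fun ρ β =>
    if hβ : β = Fin.last _ then 0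
    else (2*d) * sgF (β.castPred hβ) * (if ρ = riF hd (β.castPred hβ) then 1 else 0)

noncomputable def WOm {d n G : ℕ} (hd : 0 < d) (Y : Fin G → Matrix (Fin d) (Fin n) ℝ) :
    Matrix (Fin (2*d*G)) (Fin n) ℝ :=
  Matrix.of fun j c => if j.1 % 2 = 0 then Y (giF j) (riF hd j) c else 0



noncomputable def sv {d n G : ℕ} (hd : 0 < d) (v : Fin G → Fin (d*n) → ℝ)
    (Z : Matrix (Fin d) (Fin n) ℝ) (a : Fin G) : ℝ :=
  (∑ t, v a t * colStack hd Z t) - (∑ t, v a t ^ 2) / 2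

noncomputable def Lf {d n G : ℕ} (hd : 0 < d) (v : Fin G → Fin (d*n) → ℝ)
    (Z : Matrix (Fin d) (Fin n) ℝ) : Matrix (Fin (2*d*G+1)) (Fin (2*d*G)) ℝ :=
  Matrix.of fun β i =>
    if β = Fin.last _ then sv hd v Z (giF i) else if β = i.castSucc then 1 else 0

lemma colStack_encDN {d n : ℕ} (hd : 0 < d) (Z : Matrix (Fin d) (Fin n) ℝ)
    (x : Fin d × Fin n) : colStack hd Z (encDN d n hd x) = Z x.1 x.2 := by
  unfold colStack
  have e1 : (⟨((encDN d n hd x) : Fin (d*n)).1 % d, Nat.mod_lt _ hd⟩ : Fin d) = x.1 :=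
    Fin.ext (encDN_mod hd x)
  have e2 : (⟨((encDN d n hd x) : Fin (d*n)).1 / d,
      Nat.div_lt_of_lt_mul (encDN d n hd x).2⟩ : Fin n) = x.2 :=
    Fin.ext (encDN_div hd x)
  rw [e1, e2]

lemma colStack_sum {d n G : ℕ} (hd : 0 < d) (v : Fin G → Fin (d*n) → ℝ)
    (Z : Matrix (Fin d) (Fin n) ℝ) (a : Fin G) :
    ∑ c' : Fin n, ∑ ρ : Fin d, v a (encDN d n hd (ρ, c')) * Z ρ c'
      = ∑ t, v a t * colStack hd Z t := by
  rw [← Equiv.sum_comp (encDN d n hd) (fun t => v a t * colStack hd Z t)]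
  rw [Fintype.sum_prod_type, Finset.sum_comm]
  refine Finset.sum_congr rfl fun ρ _ => Finset.sum_congr rfl fun c' _ => ?_
  rw [colStack_encDN hd Z (ρ, c')]

lemma step1 {d n G : ℕ} (hd : 0 < d) (hG : 0 < G) (v : Fin G → Fin (d*n) → ℝ)
    (Z : Matrix (Fin d) (Fin n) ℝ) :
    (∑ h : Fin (2*d*G*n), Pm hd hG v h * Z * Qm hd hG h) + Rbm v = Lf hd v Z := by
  ext β i
  have hre : ∀ (F : Fin (2*d*G*n) → ℝ),
      ∑ h, F h = ∑ p : Fin (2*d*G) × Fin n, F (encDN (2*d*G) n (hm2 hd hG) p) :=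
    fun F => (Equiv.sum_comp _ F).symm
  simp only [Matrix.add_apply, Matrix.sum_apply, Matrix.mul_apply, Pm, Qm, Rbm, Lf,
    Matrix.of_apply]
  rw [hre]
  simp only [Equiv.symm_apply_apply]
  rw [Fintype.sum_prod_type]
  simp only [mul_ite, mul_one, mul_zero, ite_mul, zero_mul, one_mul,
    Finset.sum_ite_eq, Finset.sum_ite_eq', Finset.mem_univ, if_true]
  rw [Finset.sum_comm]
  simp only [Finset.sum_ite_eq, Finset.mem_univ, if_true]
  by_cases hβ : β = Fin.last (2*d*G)
  · simp only [if_pos hβ]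
    rw [colStack_sum hd v Z (giF i)]
    unfold sv; ring
  · simp only [if_neg hβ]
    simp

noncomputable def Kf {d n G : ℕ} (hd : 0 < d) (v : Fin G → Fin (d*n) → ℝ)
    (Z : Matrix (Fin d) (Fin n) ℝ) (R : ℝ) : Matrix (Fin (2*d*G+1)) (Fin (2*d*G)) ℝ :=
  Matrix.of fun a i =>
    if a = Fin.last _ then R * sv hd v Z (giF i) else if a = i.castSucc then 1 else 0

lemma step2 {d n G : ℕ} (hd : 0 < d) (v : Fin G → Fin (d*n) → ℝ)
    (Z : Matrix (Fin d) (Fin n) ℝ) (R : ℝ) :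
    WKm d G R * Lf hd v Z = Kf hd v Z R := by
  ext a i
  simp only [Matrix.mul_apply, WKm, Lf, Kf, Matrix.of_apply]
  rw [Fin.sum_univ_castSucc]
  have hne : ∀ β' : Fin (2*d*G), Fin.castSucc β' ≠ Fin.last (2*d*G) :=
    fun β' => (Fin.castSucc_lt_last β').ne
  by_cases ha : a = Fin.last (2*d*G)
  · simp [ha, hne]
  · obtain ⟨a', rfl⟩ := Fin.exists_castSucc_eq.mpr ha
    simp [hne, Fin.castSucc_inj, Ne.symm (hne a'), eq_comm]

noncomputable def Qf {d G : ℕ} (hd : 0 < d) : Matrix (Fin (2*d*G+1)) (Fin (2*d*G)) ℝ :=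
  Matrix.of fun a j =>
    if ha : a = Fin.last _ then 1 else Real.log (Ef hd (a.castPred ha) j)

lemma step3 {d n G : ℕ} (hd : 0 < d) (v : Fin G → Fin (d*n) → ℝ)
    (Z : Matrix (Fin d) (Fin n) ℝ) :
    WQm hd (G := G) * Lf hd v Z = Qf hd (G := G) := by
  ext a j
  simp only [Matrix.mul_apply, WQm, Lf, Qf, Matrix.of_apply]
  rw [Fin.sum_univ_castSucc]
  have hne : ∀ β' : Fin (2*d*G), Fin.castSucc β' ≠ Fin.last (2*d*G) :=
    fun β' => (Fin.castSucc_lt_last β').ne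
  simp [hne, Fin.castSucc_inj, Fin.castPred_castSucc]

lemma step4 {d n G : ℕ} (hd : 0 < d) (v : Fin G → Fin (d*n) → ℝ)
    (Z : Matrix (Fin d) (Fin n) ℝ) (R : ℝ) :
    (Kf hd v Z R)ᵀ * Qf hd (G := G) =
      Matrix.of (fun i j => Real.log (Ef hd i j) + R * sv hd v Z (giF i)) := by
  ext i j
  simp only [Matrix.mul_apply, Matrix.transpose_apply, Kf, Qf, Matrix.of_apply]
  rw [Fin.sum_univ_castSucc]
  have hne : ∀ β' : Fin (2*d*G), Fin.castSucc β' ≠ Fin.last (2*d*G) :=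
    fun β' => (Fin.castSucc_lt_last β').ne
  simp [hne, Fin.castSucc_inj, Fin.castPred_castSucc]

lemma sgF_encG {d G : ℕ} (hd : 0 < d) (hG : 0 < G) (a : Fin G) (b : Fin d) (c : Fin 2) :
    sgF (encG d G hd hG (a, b, c)) = if c.1 = 0 then 1 else -1 := by
  unfold sgF
  rw [mod2_encG hd hG (a, b, c)]

lemma denomAux {d G : ℕ} (hd : 0 < d) (hG : 0 < G) (w : Fin G → ℝ) (j : Fin (2*d*G)) :
    ∑ k, Ef hd k j * w (giF k) = 4 * (d : ℝ) * ∑ a, w a := by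
  rw [← Equiv.sum_comp (encG d G hd hG) (fun k => Ef hd k j * w (giF k))]
  rw [Fintype.sum_prod_type]
  have inner : ∀ a : Fin G, (∑ y : Fin d × Fin 2,
      Ef hd (encG d G hd hG (a, y)) j * w (giF (encG d G hd hG (a, y))))
        = (d : ℝ) * (4 * w a) := by
    intro a
    rw [Fintype.sum_prod_type]
    have hb : ∀ b : Fin d, (∑ c : Fin 2,
        Ef hd (encG d G hd hG (a, b, c)) j * w (giF (encG d G hd hG (a, b, c))))
          = 4 * w a := by
      intro b
      rw [Fin.sum_univ_two]
      simp only [Ef, giF_encG, riF_encG, sgF_encG]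
      norm_num
      split_ifs with h <;> ring
    rw [Finset.sum_congr rfl (fun b _ => hb b), Finset.sum_const, Finset.card_univ,
      Fintype.card_fin, nsmul_eq_mul]
  rw [Finset.sum_congr rfl (fun a _ => inner a), ← Finset.mul_sum, ← Finset.mul_sum]
  ring

lemma step5 {d n G : ℕ} (hd : 0 < d) (hG : 0 < G) (v : Fin G → Fin (d*n) → ℝ)
    (Z : Matrix (Fin d) (Fin n) ℝ) (R : ℝ) :
    softmax (Matrix.of (fun i j => Real.log (Ef hd i j) + R * sv hd v Z (giF i)))
      = Matrix.of (fun i j => Ef hd i j * Real.exp (R * sv hd v Z (giF i)) /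
          (4 * (d : ℝ) * ∑ a, Real.exp (R * sv hd v Z a))) := by
  ext i j
  simp only [softmax, Matrix.of_apply]
  have he : ∀ k, Real.exp (Real.log (Ef hd k j) + R * sv hd v Z (giF k))
      = Ef hd k j * Real.exp (R * sv hd v Z (giF k)) := fun k => by
    rw [Real.exp_add, exp_log_Ef]
  simp only [he]
  rw [denomAux hd hG (fun a => Real.exp (R * sv hd v Z a)) j]

noncomputable def Vf {d G : ℕ} (hd : 0 < d) : Matrix (Fin d) (Fin (2*d*G)) ℝ :=
  Matrix.of fun ρ i => 2 * (d : ℝ) * sgF i * (if ρ = riF hd i then 1 else 0)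

lemma step6 {d n G : ℕ} (hd : 0 < d) (v : Fin G → Fin (d*n) → ℝ)
    (Z : Matrix (Fin d) (Fin n) ℝ) :
    WVm hd (G := G) * Lf hd v Z = Vf hd (G := G) := by
  ext ρ i
  simp only [Matrix.mul_apply, WVm, Lf, Vf, Matrix.of_apply]
  rw [Fin.sum_univ_castSucc]
  have hne : ∀ β' : Fin (2*d*G), Fin.castSucc β' ≠ Fin.last (2*d*G) :=
    fun β' => (Fin.castSucc_lt_last β').ne
  simp [hne, Fin.castSucc_inj, Fin.castPred_castSucc]
  show (2 * (d : ℝ) * sgF i * if ρ = riF hd i then 1 else 0) = if ρ = riF hd i then 2 * (d : ℝ) * sgF i else 0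
  split_ifs <;> simp

lemma numerAux {d G : ℕ} (hd : 0 < d) (hG : 0 < G) (w : Fin G → ℝ) (ρ : Fin d)
    (j : Fin (2*d*G)) :
    ∑ i, (2 * (d : ℝ) * sgF i * (if ρ = riF hd i then 1 else 0)) * (Ef hd i j * w (giF i))
      = 4 * (d : ℝ) * (sgF j * (if ρ = riF hd j then 1 else 0) * w (giF j)) := by
  rw [← Equiv.sum_comp (encG d G hd hG) (fun i =>
    (2 * (d : ℝ) * sgF i * (if ρ = riF hd i then 1 else 0)) * (Ef hd i j * w (giF i)))]
  rw [Fintype.sum_prod_type]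
  have inner : ∀ a : Fin G, (∑ y : Fin d × Fin 2,
      (2 * (d : ℝ) * sgF (encG d G hd hG (a, y)) *
          (if ρ = riF hd (encG d G hd hG (a, y)) then 1 else 0)) *
        (Ef hd (encG d G hd hG (a, y)) j * w (giF (encG d G hd hG (a, y)))))
        = if a = giF j ∧ ρ = riF hd j then 4 * (d : ℝ) * sgF j * w a else 0 := by
    intro a
    rw [Fintype.sum_prod_type]
    have hb : ∀ b : Fin d, (∑ c : Fin 2,
        (2 * (d : ℝ) * sgF (encG d G hd hG (a, b, c)) *
            (if ρ = riF hd (encG d G hd hG (a, b, c)) then 1 else 0)) *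
          (Ef hd (encG d G hd hG (a, b, c)) j * w (giF (encG d G hd hG (a, b, c)))))
          = if ρ = b then (if a = giF j ∧ b = riF hd j then 4 * (d : ℝ) * sgF j * w a else 0)
            else 0 := by
      intro b
      rw [Fin.sum_univ_two]
      simp only [Ef, giF_encG, riF_encG, sgF_encG]
      norm_num
      split_ifs <;> ring
    rw [Finset.sum_congr rfl (fun b _ => hb b), Finset.sum_ite_eq, if_pos (Finset.mem_univ ρ)]
  rw [Finset.sum_congr rfl (fun a _ => inner a)]
  by_cases hr : ρ = riF hd j
  · simp only [hr, and_true]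
    rw [Finset.sum_ite_eq', if_pos (Finset.mem_univ (giF j))]
    simp [hr]
    ring
  · simp [hr]

lemma step7 {d n G : ℕ} (hd : 0 < d) (hG : 0 < G) (v : Fin G → Fin (d*n) → ℝ)
    (Z : Matrix (Fin d) (Fin n) ℝ) (R : ℝ) :
    Vf hd (G := G) * Matrix.of (fun i j => Ef hd i j * Real.exp (R * sv hd v Z (giF i)) /
          (4 * (d : ℝ) * ∑ a, Real.exp (R * sv hd v Z a)))
      = Matrix.of (fun ρ j => sgF j * (if ρ = riF hd j then 1 else 0) *
          Real.exp (R * sv hd v Z (giF j)) / ∑ a, Real.exp (R * sv hd v Z a)) := by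
  ext ρ j
  simp only [Matrix.mul_apply, Vf, Matrix.of_apply]
  have hterm : ∀ i, (2 * (d : ℝ) * sgF i * (if ρ = riF hd i then 1 else 0)) *
      (Ef hd i j * Real.exp (R * sv hd v Z (giF i)) /
        (4 * (d : ℝ) * ∑ a, Real.exp (R * sv hd v Z a)))
      = ((2 * (d : ℝ) * sgF i * (if ρ = riF hd i then 1 else 0)) *
          (Ef hd i j * Real.exp (R * sv hd v Z (giF i)))) /
        (4 * (d : ℝ) * ∑ a, Real.exp (R * sv hd v Z a)) := fun i => by ring
  rw [Finset.sum_congr rfl (fun i _ => hterm i), ← Finset.sum_div,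
    numerAux hd hG (fun a => Real.exp (R * sv hd v Z a)) ρ j]
  have hd' : (4 : ℝ) * (d : ℝ) ≠ 0 := by positivity
  rw [mul_div_mul_left _ _ hd']

lemma step8 {d n G : ℕ} (hd : 0 < d) (hG : 0 < G) (v : Fin G → Fin (d*n) → ℝ)
    (Z : Matrix (Fin d) (Fin n) ℝ) (R : ℝ) (Y : Fin G → Matrix (Fin d) (Fin n) ℝ) :
    Matrix.of (fun ρ j => sgF j * (if ρ = riF hd j then 1 else 0) *
          Real.exp (R * sv hd v Z (giF j)) / ∑ a, Real.exp (R * sv hd v Z a)) * WOm hd Y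
      = ∑ a : Fin G, (Real.exp (R * sv hd v Z a) / ∑ a', Real.exp (R * sv hd v Z a')) • Y a := by
  ext ρ c
  simp only [Matrix.mul_apply, Matrix.of_apply, Matrix.sum_apply, Matrix.smul_apply,
    smul_eq_mul, WOm]
  rw [← Equiv.sum_comp (encG d G hd hG) (fun j =>
    sgF j * (if ρ = riF hd j then 1 else 0) * Real.exp (R * sv hd v Z (giF j)) /
        (∑ a, Real.exp (R * sv hd v Z a)) *
      (if (j : Fin (2*d*G)).1 % 2 = 0 then Y (giF j) (riF hd j) c else 0))]
  rw [Fintype.sum_prod_type]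
  have inner : ∀ a : Fin G, (∑ y : Fin d × Fin 2,
      sgF (encG d G hd hG (a, y)) * (if ρ = riF hd (encG d G hd hG (a, y)) then 1 else 0) *
          Real.exp (R * sv hd v Z (giF (encG d G hd hG (a, y)))) /
          (∑ a', Real.exp (R * sv hd v Z a')) *
        (if ((encG d G hd hG (a, y)) : Fin (2*d*G)).1 % 2 = 0 then
          Y (giF (encG d G hd hG (a, y))) (riF hd (encG d G hd hG (a, y))) c else 0))
      = Real.exp (R * sv hd v Z a) / (∑ a', Real.exp (R * sv hd v Z a')) * Y a ρ c := by
    intro a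
    rw [Fintype.sum_prod_type]
    have hb : ∀ b : Fin d, (∑ c' : Fin 2,
        sgF (encG d G hd hG (a, b, c')) * (if ρ = riF hd (encG d G hd hG (a, b, c')) then 1 else 0) *
            Real.exp (R * sv hd v Z (giF (encG d G hd hG (a, b, c')))) /
            (∑ a', Real.exp (R * sv hd v Z a')) *
          (if ((encG d G hd hG (a, b, c')) : Fin (2*d*G)).1 % 2 = 0 then
            Y (giF (encG d G hd hG (a, b, c'))) (riF hd (encG d G hd hG (a, b, c'))) c else 0))
        = if ρ = b then Real.exp (R * sv hd v Z a) / (∑ a', Real.exp (R * sv hd v Z a')) *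
            Y a b c else 0 := by
      intro b
      rw [Fin.sum_univ_two]
      simp only [giF_encG, riF_encG, sgF_encG, mod2_encG]
      norm_num
      split_ifs <;> ring
    rw [Finset.sum_congr rfl (fun b _ => hb b), Finset.sum_ite_eq, if_pos (Finset.mem_univ ρ)]
  rw [Finset.sum_congr rfl (fun a _ => inner a)]

end SAttn

/-- **Single-head self-attention exactly realizes a softmax mixture of fixed matrices.**
Given `R > 0`, centers `v_0,…,v_{G−1} ∈ ℝ^{dn}` and matrices `Y_j ∈ ℝ^{d×n}` with
entries in `(−B₀, B₀)`, there are a sum-of-linear-transformations layer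
`Linear : ℝ^{d×n} → ℝ^{(2dG+1)×2dG}` and weights `W_K, W_Q, W_V, W_O` such that
for every `Z`, the attention output
`W_V·Linear(Z)·Softmax((W_K·Linear(Z))ᵀ·(W_Q·Linear(Z)))·W_O` equals
`∑_j softmaxweight_j(Z̃) · Y_j`, with weights from scores `v_jᵀZ̃ − ½‖v_j‖²` at
inverse temperature `R`, `Z̃` the column stacking of `Z`. -/
theorem selfattention_realizes_softmax_mixture
    (d n G : ℕ) (hd : 0 < d) (hn : 0 < n) (hG : 0 < G)
    (R B₀ : ℝ) (hR : 0 < R) (hB₀ : 0 < B₀)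
    (v : Fin G → Fin (d * n) → ℝ)
    (Y : Fin G → Matrix (Fin d) (Fin n) ℝ)
    (hY : ∀ j r c, -B₀ < Y j r c ∧ Y j r c < B₀) :
    ∃ (H : ℕ) (P : Fin H → Matrix (Fin (2 * d * G + 1)) (Fin d) ℝ)
      (Q : Fin H → Matrix (Fin n) (Fin (2 * d * G)) ℝ)
      (Rb : Matrix (Fin (2 * d * G + 1)) (Fin (2 * d * G)) ℝ)
      (dA : ℕ) (WK WQ : Matrix (Fin dA) (Fin (2 * d * G + 1)) ℝ)
      (WV : Matrix (Fin d) (Fin (2 * d * G + 1)) ℝ)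
      (WO : Matrix (Fin (2 * d * G)) (Fin n) ℝ),
      ∀ Z : Matrix (Fin d) (Fin n) ℝ,
        WV * (∑ i, P i * Z * Q i + Rb) *
            softmax ((WK * (∑ i, P i * Z * Q i + Rb))ᵀ *
              (WQ * (∑ i, P i * Z * Q i + Rb))) * WO
          = ∑ j : Fin G,
              (Real.exp (R * ((∑ t, v j t * colStack hd Z t) - (∑ t, v j t ^ 2) / 2)) /
                ∑ j' : Fin G,
                  Real.exp (R * ((∑ t, v j' t * colStack hd Z t)
                    - (∑ t, v j' t ^ 2) / 2))) • Y j := by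
  classical
  refine ⟨2*d*G*n, SAttn.Pm hd hG v, SAttn.Qm hd hG, SAttn.Rbm v, 2*d*G+1,
    SAttn.WKm d G R, SAttn.WQm hd, SAttn.WVm hd, SAttn.WOm hd Y, fun Z => ?_⟩
  rw [SAttn.step1 hd hG v Z, SAttn.step2 hd v Z R, SAttn.step3 hd v Z,
    SAttn.step6 hd v Z, SAttn.step4 hd v Z R, SAttn.step5 hd hG v Z R,
    SAttn.step7 hd hG v Z R, SAttn.step8 hd hG v Z R Y]
  rfl
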